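/- Let Q be a quotient module of H²(𝔻) (closed M_z^*-invariant subspace), C_z = P_Q M_z|_Q the compressed shift, and L = ran(I_Q - C_z C_z^*) = ran(P_Q P_ℂ P_Q). Then Q equals the closed linear span of {P_Q M_z^l h : l ∈ ℕ, h ∈ L}. -/

import Mathlib

open ContinuousLinearMap

open scoped InnerProductSpace

/-- Realize `H²(𝔻)` as a complex Hilbert space `H` with orthonormal basis
`(b m)_{m ∈ ℕ}` and shift `S = M_z`.  Let `Q` be a quotient module (closed `S*`-invariant
subspace) with orthogonal projection `PQ`, and `Pc` the projection onto constants, so that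
`L = ran (PQ Pc PQ)` equals `ran (I_Q - C_z C_z*)`.  Then `Q` equals the closed linear span of
`{PQ (S^l h) : l ∈ ℕ, h ∈ L}`. -/
theorem quotient_module_eq_closed_span_of_compressed_shifts
    {H : Type*} [NormedAddCommGroup H] [InnerProductSpace ℂ H] [CompleteSpace H]
    (b : HilbertBasis ℕ ℂ H)
    (S Pc PQ : H →L[ℂ] H)
    (hS : ∀ m : ℕ, S (b m) = b (m + 1))
    (hPc : ∀ x : H, Pc x = ⟪b 0, x⟫_ℂ • b 0)
    (Q : Submodule ℂ H)
    (hQclosed : IsClosed (Q : Set H))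
    (hQinv : ∀ x ∈ Q, ContinuousLinearMap.adjoint S x ∈ Q)
    (hPQsa : IsSelfAdjoint PQ)
    (hPQidem : PQ ∘L PQ = PQ)
    (hPQrange : Set.range PQ = (Q : Set H)) :
    Q = (Submodule.span ℂ
          {x : H | ∃ (l : ℕ) (y : H), x = PQ ((S ^ l) ((PQ ∘L Pc ∘L PQ) y))}).topologicalClosure := by
  classical
  set T := ContinuousLinearMap.adjoint S with hT
  -- PQ fixes Q
  have hPQfix : ∀ x ∈ Q, PQ x = x := by
    intro x hx
    have hx' : x ∈ Set.range ⇑PQ := by rw [hPQrange]; exact hx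
    obtain ⟨z, rfl⟩ := hx'
    have h2 := DFunLike.congr_fun hPQidem z
    simpa using h2
  have hadjPQ : ContinuousLinearMap.adjoint PQ = PQ := hPQsa.adjoint_eq
  have hinnerPQ : ∀ (u v : H), v ∈ Q → ⟪v, PQ u⟫_ℂ = ⟪v, u⟫_ℂ := by
    intro u v hv
    rw [← ContinuousLinearMap.adjoint_inner_left, hadjPQ, hPQfix v hv]
  have hinnerS : ∀ (l : ℕ) (x v : H), ⟪x, (S ^ l) v⟫_ℂ = ⟪(T ^ l) x, v⟫_ℂ := by
    intro l
    induction l with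
    | zero => intro x v; simp
    | succ n ih =>
        intro x v
        rw [pow_succ S n, pow_succ' T n, ContinuousLinearMap.mul_apply,
          ContinuousLinearMap.mul_apply, ih x (S v), hT,
          ContinuousLinearMap.adjoint_inner_left]
  have hQT : ∀ (l : ℕ) (x : H), x ∈ Q → (T ^ l) x ∈ Q := by
    intro l
    induction l with
    | zero => intro x hx; simpa using hx
    | succ n ih =>
        intro x hx
        rw [pow_succ' T n, ContinuousLinearMap.mul_apply]
        exact hQinv _ (ih x hx)
  have hbl : ∀ l : ℕ, (S ^ l) (b 0) = b l := by
    intro l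
    induction l with
    | zero => simp
    | succ n ih =>
        rw [pow_succ' S n, ContinuousLinearMap.mul_apply, ih, hS n]
  -- key vanishing lemma
  have hzero : ∀ d ∈ Q,
      (∀ (l : ℕ) (y : H), ⟪PQ ((S ^ l) ((PQ ∘L Pc ∘L PQ) y)), d⟫_ℂ = 0) → d = 0 := by
    intro d hd h0
    have hbd : ∀ l : ℕ, ⟪b 0, (T ^ l) d⟫_ℂ = 0 := by
      intro l
      have h := h0 l ((T ^ l) d)
      set w := (T ^ l) d with hw
      have hwQ : w ∈ Q := hQT l d hd
      have h1 : ⟪d, PQ ((S ^ l) ((PQ ∘L Pc ∘L PQ) w))⟫_ℂ = 0 := by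
        rw [← inner_conj_symm, h]; simp
      rw [hinnerPQ _ _ hd, hinnerS l d _, ← hw, ContinuousLinearMap.comp_apply,
        ContinuousLinearMap.comp_apply, hPQfix w hwQ, hinnerPQ _ _ hwQ, hPc w,
        inner_smul_right] at h1
      rcases mul_eq_zero.mp h1 with h3 | h3
      · exact h3
      · rw [← inner_conj_symm, h3]; simp
    have hbld : ∀ l : ℕ, ⟪b l, d⟫_ℂ = 0 := by
      intro l
      have : ⟪d, b l⟫_ℂ = 0 := by
        rw [← hbl l, hinnerS l d (b 0), ← inner_conj_symm, hbd l]
        simp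
      rw [← inner_conj_symm, this]; simp
    have : b.repr d = 0 := by
      ext l
      simpa [b.repr_apply_apply] using hbld l
    simpa using congrArg b.repr.symm this
  set Sset : Set H :=
    {x : H | ∃ (l : ℕ) (y : H), x = PQ ((S ^ l) ((PQ ∘L Pc ∘L PQ) y))} with hSset
  set K := (Submodule.span ℂ Sset).topologicalClosure with hK
  have hKQ : K ≤ Q := by
    apply Submodule.topologicalClosure_minimal
    · apply Submodule.span_le.mpr
      intro x hx
      obtain ⟨l, y, rfl⟩ := hx
      have : PQ ((S ^ l) ((PQ ∘L Pc ∘L PQ) y)) ∈ Set.range PQ := ⟨_, rfl⟩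
      rwa [hPQrange] at this
    · exact hQclosed
  have hKclosed : IsClosed (K : Set H) := Submodule.isClosed_topologicalClosure _
  haveI : CompleteSpace K := hKclosed.completeSpace_coe
  have hQK : Q ≤ K := by
    intro x hx
    set p : H := (K.orthogonalProjectionOnto x : H) with hp
    have hpK : p ∈ K := (K.orthogonalProjectionOnto x).2
    have hdK : x - p ∈ Kᗮ := K.sub_starProjection_mem_orthogonal x
    have hdQ : x - p ∈ Q := Q.sub_mem hx (hKQ hpK)
    have hd0 : x - p = 0 := by
      apply hzero _ hdQ
      intro l y
      have hg : PQ ((S ^ l) ((PQ ∘L Pc ∘L PQ) y)) ∈ K := by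
        apply Submodule.le_topologicalClosure
        apply Submodule.subset_span
        exact ⟨l, y, rfl⟩
      exact (Submodule.mem_orthogonal K (x - p)).mp hdK _ hg
    have : x = p := by rwa [sub_eq_zero] at hd0
    rw [this]; exact hpK
  exact le_antisymm hQK hKQ
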